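/- Let Γ be a countable set of sentences closed under Boolean operations, enumerated as {γ_i : i ∈ ω}, and equip C(Γ) ⊆ 2^ω with the ultrametric d(x,y) = max{2^{-i} : x(i) ≠ y(i)} (and d(x,x)=0). A class K of structures is axiomatizable by a single Γ-sentence if and only if the distance between the sets T_K and T_{K^c} is strictly positive, where K^c is the complement class. -/

import Mathlib

/-- The ultrametric `d(x,y) = max {2^{-i} : x i ≠ y i}` (with `d(x,x) = 0`) on `2^ω`. -/
noncomputable def cantorDist (x y : ℕ → Bool) : ℝ :=
  ⨆ (i : ℕ) (_ : x i ≠ y i), (2 : ℝ)⁻¹ ^ i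

lemma cantorDist_le (x y : ℕ → Bool) {c : ℝ} (hc : 0 ≤ c)
    (h : ∀ i, x i ≠ y i → (2 : ℝ)⁻¹ ^ i ≤ c) : cantorDist x y ≤ c :=
  Real.iSup_le (fun i => Real.iSup_le (fun h' => h i h') hc) hc

lemma le_cantorDist (x y : ℕ → Bool) (i : ℕ) (h : x i ≠ y i) :
    (2 : ℝ)⁻¹ ^ i ≤ cantorDist x y := by
  have hb : BddAbove (Set.range fun i : ℕ => ⨆ (_ : x i ≠ y i), (2 : ℝ)⁻¹ ^ i) := by
    refine ⟨1, ?_⟩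
    rintro _ ⟨j, rfl⟩
    exact Real.iSup_le (fun _ => pow_le_one₀ (by norm_num) (by norm_num)) (by norm_num)
  refine le_trans ?_ (le_ciSup hb i)
  rw [ciSup_pos h]

lemma exists_gamma_empty {Struc : Type*} (γ : ℕ → Set Struc)
    (hand : ∀ i j : ℕ, ∃ k, γ k = γ i ∩ γ j)
    (hneg : ∀ i : ℕ, ∃ k, γ k = (γ i)ᶜ) : ∃ k, γ k = (∅ : Set Struc) := by
  obtain ⟨k0, hk0⟩ := hneg 0
  obtain ⟨k, hk⟩ := hand 0 k0
  exact ⟨k, by rw [hk, hk0]; simp⟩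

lemma exists_gamma_cell {Struc : Type*} (γ : ℕ → Set Struc)
    (hand : ∀ i j : ℕ, ∃ k, γ k = γ i ∩ γ j)
    (hor : ∀ i j : ℕ, ∃ k, γ k = γ i ∪ γ j)
    (hneg : ∀ i : ℕ, ∃ k, γ k = (γ i)ᶜ)
    (s : ℕ → Bool) : ∀ n : ℕ, ∃ k, γ k = {A | ∀ i < n, (A ∈ γ i ↔ s i = true)} := by
  intro n
  induction n with
  | zero =>
    obtain ⟨k0, hk0⟩ := hneg 0
    obtain ⟨k, hk⟩ := hor 0 k0
    refine ⟨k, ?_⟩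
    rw [hk, hk0]
    ext A; simp [Classical.em]
  | succ n ih =>
    obtain ⟨k, hk⟩ := ih
    have key : {A | ∀ i < n + 1, (A ∈ γ i ↔ s i = true)} =
        γ k ∩ (if s n then γ n else (γ n)ᶜ) := by
      rw [hk]
      ext A
      simp only [Set.mem_setOf_eq, Set.mem_inter_iff]
      constructor
      · intro h
        refine ⟨fun i hi => h i (hi.trans (Nat.lt_succ_self n)), ?_⟩
        have := h n (Nat.lt_succ_self n)
        cases hs : s n <;> simp [hs] at this ⊢ <;> tauto
      · rintro ⟨h1, h2⟩ i hi
        rcases Nat.lt_succ_iff_lt_or_eq.1 hi with hi' | rfl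
        · exact h1 i hi'
        · cases hs : s i <;> simp [hs] at h2 ⊢ <;> tauto
    cases hs : s n with
    | true =>
      obtain ⟨k', hk'⟩ := hand k n
      exact ⟨k', by rw [hk', key, hs]; simp⟩
    | false =>
      obtain ⟨kn, hkn⟩ := hneg n
      obtain ⟨k', hk'⟩ := hand k kn
      exact ⟨k', by rw [hk', key, hs, hkn]; simp⟩

lemma exists_gamma_finset_union {Struc : Type*} {ι : Type*} (γ : ℕ → Set Struc)
    (hand : ∀ i j : ℕ, ∃ k, γ k = γ i ∩ γ j)
    (hor : ∀ i j : ℕ, ∃ k, γ k = γ i ∪ γ j)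
    (hneg : ∀ i : ℕ, ∃ k, γ k = (γ i)ᶜ)
    (s : Finset ι) (f : ι → Set Struc) (hf : ∀ i ∈ s, ∃ k, γ k = f i) :
    ∃ k, γ k = ⋃ i ∈ s, f i := by
  classical
  induction s using Finset.induction with
  | empty => simpa using exists_gamma_empty γ hand hneg
  | insert a s hnotmem ih =>
    obtain ⟨k1, hk1⟩ := hf a (Finset.mem_insert_self a s)
    obtain ⟨k2, hk2⟩ := ih (fun i hi => hf i (Finset.mem_insert_of_mem hi))
    obtain ⟨k, hk⟩ := hor k1 k2
    refine ⟨k, ?_⟩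
    rw [hk, hk1, hk2]
    simp [Finset.set_biUnion_insert]

/-- For a countable Boolean-closed set of sentences `Γ = {γ i : i ∈ ω}` (each
sentence identified with its class `γ i` of models), a class `K` is axiomatizable by a single
`Γ`-sentence iff the distance between `T_K` and `T_{K^c}` is strictly positive. -/
theorem single_sentence_iff_dist_pos {Struc : Type*} (γ : ℕ → Set Struc)
    (hand : ∀ i j : ℕ, ∃ k, γ k = γ i ∩ γ j)
    (hor : ∀ i j : ℕ, ∃ k, γ k = γ i ∪ γ j)
    (hneg : ∀ i : ℕ, ∃ k, γ k = (γ i)ᶜ)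
    (K : Set Struc) :
    (∃ i, K = γ i) ↔
      ∃ ε > (0 : ℝ), ∀ x y : ℕ → Bool,
        (∃ A ∈ K, ∀ i, A ∈ γ i ↔ x i = true) →
        (∃ B ∈ Kᶜ, ∀ i, B ∈ γ i ↔ y i = true) →
        ε ≤ cantorDist x y := by
  classical
  constructor
  · rintro ⟨i, rfl⟩
    refine ⟨(2 : ℝ)⁻¹ ^ i, by positivity, ?_⟩
    rintro x y ⟨A, hA, hxA⟩ ⟨B, hB, hyB⟩
    have hx : x i = true := (hxA i).1 hA
    have hy : y i ≠ true := fun h => hB ((hyB i).2 h)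
    exact le_cantorDist x y i (by rw [hx]; exact fun h => hy h.symm)
  · rintro ⟨ε, hε, H⟩
    obtain ⟨n, hn⟩ := exists_pow_lt_of_lt_one hε (show (2 : ℝ)⁻¹ < 1 by norm_num)
    -- patterns
    set pat : Struc → ℕ → Bool := fun A i => decide (A ∈ γ i) with hpat
    have pat_spec : ∀ A i, A ∈ γ i ↔ pat A i = true := by
      intro A i; simp [hpat]
    -- extend a Fin n → Bool to ℕ → Bool
    set ext : (Fin n → Bool) → ℕ → Bool :=
      fun t i => if h : i < n then t ⟨i, h⟩ else false with hext
    set f : (Fin n → Bool) → Set Struc :=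
      fun t => if (∃ A ∈ K, ∀ i < n, (A ∈ γ i ↔ ext t i = true)) then
        {A | ∀ i < n, (A ∈ γ i ↔ ext t i = true)} else ∅ with hf
    have hfk : ∀ t ∈ (Finset.univ : Finset (Fin n → Bool)), ∃ k, γ k = f t := by
      intro t _
      by_cases h : ∃ A ∈ K, ∀ i < n, (A ∈ γ i ↔ ext t i = true)
      · simpa [hf, h] using exists_gamma_cell γ hand hor hneg (ext t) n
      · simpa [hf, h] using exists_gamma_empty γ hand hneg
    obtain ⟨k, hk⟩ := exists_gamma_finset_union γ hand hor hneg Finset.univ f hfk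
    refine ⟨k, ?_⟩
    rw [hk]
    ext A
    simp only [Set.mem_iUnion, Finset.mem_univ, Set.iUnion_true, exists_prop, true_and]
    constructor
    · intro hA
      refine ⟨fun j => pat A j, ?_⟩
      have hcond : ∃ A' ∈ K, ∀ i < n, (A' ∈ γ i ↔ ext (fun j => pat A j) i = true) := by
        refine ⟨A, hA, fun i hi => ?_⟩
        simp only [hext, dif_pos hi]
        exact pat_spec A i
      rw [hf]
      simp only [if_pos hcond]
      intro i hi
      simp only [hext, dif_pos hi]
      exact pat_spec A i
    · rintro ⟨t, ht⟩
      by_cases hcond : ∃ A' ∈ K, ∀ i < n, (A' ∈ γ i ↔ ext t i = true)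
      · simp only [hf, if_pos hcond] at ht
        obtain ⟨A', hA', hA't⟩ := hcond
        by_contra hA
        have := H (pat A') (pat A) ⟨A', hA', pat_spec A'⟩ ⟨A, hA, pat_spec A⟩
        have hle : cantorDist (pat A') (pat A) ≤ (2 : ℝ)⁻¹ ^ n := by
          apply cantorDist_le _ _ (by positivity)
          intro i hi
          rcases lt_or_ge i n with h' | h'
          · exfalso
            apply hi
            have e1 : pat A' i = ext t i := by
              have := (hA't i h').symm.trans (pat_spec A' i)
              cases h2 : ext t i <;> cases h3 : pat A' i <;> simp [h2, h3] at this ⊢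
            have e2 : pat A i = ext t i := by
              have := ((ht i h').symm.trans (pat_spec A i))
              cases h2 : ext t i <;> cases h3 : pat A i <;> simp [h2, h3] at this ⊢
            rw [e1, e2]
          · exact pow_le_pow_of_le_one (by norm_num) (by norm_num) h'
        linarith
      · simp only [hf, if_neg hcond] at ht
        exact absurd ht (Set.notMem_empty A)
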